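/- Consider the runoff combination Copeland+cup on the candidate set {a,b,c} with weighted votes, a tie-breaking order T whose T-greatest element is c, and any fixed cup agenda. Let P be a weighted profile (the non-manipulators) and w_1,…,w_k positive manipulator weights. Then there exists a choice of manipulator votes which, added to P with weights w_1,…,w_k, makes c the Copeland+cup winner if and only if c is the Copeland+cup winner when every manipulator casts the vote c≻b≻a, or c is the Copeland+cup winner when every manipulator casts the vote c≻a≻b. -/

import Mathlib

/-
Weighted voting on the three-candidate set {a, b, c}. A weighted profile is a
finite list of pairs (vote, weight), where a vote is a duplicate-free list of
all three candidates (earlier = more preferred) and the weight is a positive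
natural number. `T` always denotes the tie-breaking (strict linear) order.
-/

inductive Cand : Type
  | a | b | c
  deriving DecidableEq

instance : Fintype Cand :=
  ⟨{Cand.a, Cand.b, Cand.c}, fun x => by cases x <;> simp⟩

/-- A weighted profile: a list of (vote, weight) pairs. -/
abbrev WProfile := List (List Cand × ℕ)

/-- The total weight `n` of a weighted profile. -/
def totalW (P : WProfile) : ℕ := (P.map Prod.snd).sum

/-- `N P x y`: the total weight of votes in `P` ranking `x` above `y`. -/
def Nw (P : WProfile) (x y : Cand) : ℕ :=
  ((P.filter fun p => p.1.idxOf x < p.1.idxOf y).map Prod.snd).sum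

/-- The `k`-approval score of `e`: the total weight of votes ranking `e`
among the top `k` positions. -/
def kApproval (P : WProfile) (k : ℕ) (e : Cand) : ℕ :=
  ((P.filter fun p => p.1.idxOf e < k).map Prod.snd).sum

/-- The Bucklin score of `e`: the least `k` such that the `k`-approval score
of `e` is strictly greater than half the total weight. -/
noncomputable def bucklinScore (P : WProfile) (e : Cand) : ℕ :=
  sInf {k | totalW P < 2 * kApproval P k e}

/-- `v` is a vote: a strict linear order of all three candidates. -/
def ValidVote (v : List Cand) : Prop := v.Nodup ∧ v.toFinset = Finset.univ

/-- A valid weighted profile: every vote is a linear order and every weight is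
positive. -/
def ValidWProfile (P : WProfile) : Prop := ∀ p ∈ P, ValidVote p.1 ∧ 0 < p.2

/-- The `T`-greatest candidate among the maximisers of `f`. -/
def argmaxT (T : LinearOrder Cand) (f : Cand → ℕ) : Cand :=
  @Finset.max' Cand T (Finset.univ.filter fun e => ∀ z, f z ≤ f e) (by
    obtain ⟨w, hw, hm⟩ := Finset.exists_max_image Finset.univ f ⟨Cand.a, Finset.mem_univ _⟩
    exact ⟨w, Finset.mem_filter.2 ⟨Finset.mem_univ _, fun z => hm z (Finset.mem_univ _)⟩⟩)

/-- The `T`-greatest candidate among the minimisers of `f`. -/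
def argminT (T : LinearOrder Cand) (f : Cand → ℕ) : Cand :=
  @Finset.max' Cand T (Finset.univ.filter fun e => ∀ z, f e ≤ f z) (by
    obtain ⟨w, hw, hm⟩ := Finset.exists_min_image Finset.univ f ⟨Cand.a, Finset.mem_univ _⟩
    exact ⟨w, Finset.mem_filter.2 ⟨Finset.mem_univ _, fun z => hm z (Finset.mem_univ _)⟩⟩)

/-- The plurality score of `e`: the total weight of votes ranking `e` first. -/
def pluralityScore (P : WProfile) (e : Cand) : ℕ :=
  ((P.filter fun p => p.1.head? = some e).map Prod.snd).sum

/-- The plurality winner. -/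
def pluralityWinner (T : LinearOrder Cand) (P : WProfile) : Cand :=
  argmaxT T (pluralityScore P)

/-- The Copeland score of `x`: the number of candidates `z ≠ x` with
`N(x,z) > N(z,x)`. -/
def copelandScore (P : WProfile) (x : Cand) : ℕ :=
  (Finset.univ.filter fun z => z ≠ x ∧ Nw P z x < Nw P x z).card

/-- The Copeland winner. -/
def copelandWinner (T : LinearOrder Cand) (P : WProfile) : Cand :=
  argmaxT T (copelandScore P)

/-- The maximin score of `x`: the minimum of `N(x,z)` over `z ≠ x`. -/
def maximinScore (P : WProfile) (x : Cand) : ℕ :=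
  (((Finset.univ : Finset Cand).erase x).image fun z => Nw P x z).min' (by
    apply Finset.Nonempty.image
    cases x <;> decide)

/-- The maximin winner. -/
def maximinWinner (T : LinearOrder Cand) (P : WProfile) : Cand :=
  argmaxT T (maximinScore P)

/-- The Bucklin winner: the `T`-greatest candidate of minimal Bucklin score. -/
noncomputable def bucklinWinner (T : LinearOrder Cand) (P : WProfile) : Cand :=
  argminT T (bucklinScore P)

/-- Winner of the pairwise contest between `x` and `z` (the `T`-greater
candidate winning on a tie). -/
def pairWin (T : LinearOrder Cand) (P : WProfile) (x z : Cand) : Cand :=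
  if Nw P z x < Nw P x z then x
  else if Nw P x z < Nw P z x then z
  else if T.lt x z then z else x

/-- The candidate other than the two (distinct) given ones. -/
def third (x y : Cand) : Cand :=
  if Cand.a ≠ x ∧ Cand.a ≠ y then Cand.a
  else if Cand.b ≠ x ∧ Cand.b ≠ y then Cand.b
  else Cand.c

/-- The cup winner for the agenda in which `p` and `q` meet first and the
winner then meets the remaining candidate. -/
def cupWinner (T : LinearOrder Cand) (p q : Cand) (P : WProfile) : Cand :=
  pairWin T P (pairWin T P p q) (third p q)

/-- Run-off combination `X + Y`: the common winner if `X` and `Y` agree;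
otherwise the pairwise-majority winner between the two winners, with the
`T`-greater candidate winning a tied run-off. -/
def runoffWinner (T : LinearOrder Cand) (X Y : WProfile → Cand) (P : WProfile) : Cand :=
  let x := X P
  let y := Y P
  if x = y then x
  else if Nw P y x < Nw P x y then x
  else if Nw P x y < Nw P y x then y
  else if T.lt x y then y else x

namespace CCM

def oOf (oab oac obc : Ordering) : Cand → Cand → Ordering
  | .a, .b => oab
  | .b, .a => oab.swap
  | .a, .c => oac
  | .c, .a => oac.swap
  | .b, .c => obc
  | .c, .b => obc.swap
  | _, _ => .eq

def tOf (tab : Bool) : Cand → Cand → Bool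
  | .a, .b => tab
  | .b, .a => !tab
  | .a, .c => true
  | .b, .c => true
  | _, _ => false

def mPair (o : Cand → Cand → Ordering) (t : Cand → Cand → Bool) (x y : Cand) : Cand :=
  match o x y with
  | .gt => x
  | .lt => y
  | .eq => if t x y then y else x

def mScore (o : Cand → Cand → Ordering) (x : Cand) : ℕ :=
  (if o x .a = .gt then 1 else 0) + ((if o x .b = .gt then 1 else 0) + (if o x .c = .gt then 1 else 0))

def mArg (tab : Bool) (f : Cand → ℕ) : Cand :=
  if f .a ≤ f .c ∧ f .b ≤ f .c then .c
  else if f .b < f .a ∨ (f .a = f .b ∧ tab = false) then .a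
  else .b

def mWin (oab oac obc : Ordering) (tab : Bool) (p q : Cand) : Cand :=
  let o := oOf oab oac obc
  let t := tOf tab
  let x := mArg tab (mScore o)
  let y := mPair o t (mPair o t p q) (third p q)
  if x = y then x else mPair o t x y

def ocmp (Q : WProfile) (x y : Cand) : Ordering := compare (Nw Q x y) (Nw Q y x)

lemma ocmp_self (Q : WProfile) (x : Cand) : ocmp Q x x = .eq :=
  compare_eq_iff_eq.2 rfl

lemma ocmp_swap (Q : WProfile) (x y : Cand) : ocmp Q y x = (ocmp Q x y).swap := by
  unfold ocmp
  rcases lt_trichotomy (Nw Q x y) (Nw Q y x) with h | h | h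
  · rw [compare_lt_iff_lt.2 h, compare_gt_iff_gt.2 h]; rfl
  · rw [compare_eq_iff_eq.2 h, compare_eq_iff_eq.2 h.symm]; rfl
  · rw [compare_gt_iff_gt.2 h, compare_lt_iff_lt.2 h]; rfl

lemma ocmp_eq_oOf (Q : WProfile) {oab oac obc : Ordering}
    (h1 : ocmp Q .a .b = oab) (h2 : ocmp Q .a .c = oac) (h3 : ocmp Q .b .c = obc) :
    ocmp Q = oOf oab oac obc := by
  subst h1 h2 h3
  funext x y
  cases x <;> cases y <;>
    first
      | rfl
      | exact ocmp_self Q _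
      | exact ocmp_swap Q _ _

end CCM
namespace CCM
variable (T : LinearOrder Cand)

lemma t_bridge (hT : ∀ x : Cand, T.le x Cand.c) : ∀ x y : Cand, T.lt x y ↔ tOf (decide (T.lt .a .b)) x y = true := by
  letI := T
  have hac : T.lt .a .c := lt_of_le_of_ne (hT .a) (by decide)
  have hbc : T.lt .b .c := lt_of_le_of_ne (hT .b) (by decide)
  have hba : T.lt .b .a ↔ ¬ T.lt .a .b := by
    constructor
    · exact fun h h' => absurd (lt_trans h' h) (lt_irrefl _)
    · intro h; exact lt_of_le_of_ne (le_of_not_gt h) (by decide)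
  intro x y
  cases x <;> cases y <;>
    simp [tOf, hac, hbc, hba, lt_irrefl, not_lt_of_gt hac, not_lt_of_gt hbc, lt_asymm]

lemma pair_bridge (hT : ∀ x : Cand, T.le x Cand.c) (Q : WProfile) (x y : Cand) :
    pairWin T Q x y = mPair (ocmp Q) (tOf (decide (T.lt .a .b))) x y := by
  unfold pairWin mPair
  rcases lt_trichotomy (Nw Q x y) (Nw Q y x) with h | h | h
  · rw [show ocmp Q x y = .lt from compare_lt_iff_lt.2 h]
    rw [if_neg (by omega), if_pos h]
  · rw [show ocmp Q x y = .eq from compare_eq_iff_eq.2 h]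
    rw [if_neg (by omega), if_neg (by omega)]
    by_cases ht : T.lt x y
    · rw [if_pos ht, if_pos ((t_bridge T hT x y).1 ht)]
    · rw [if_neg ht, if_neg (fun hb => ht ((t_bridge T hT x y).2 hb))]
  · rw [show ocmp Q x y = .gt from compare_gt_iff_gt.2 h]
    rw [if_pos h]

lemma sum_cand (f : Cand → ℕ) : ∑ z : Cand, f z = f .a + (f .b + f .c) := by
  rw [show (Finset.univ : Finset Cand) = {Cand.a, Cand.b, Cand.c} from rfl,
    Finset.sum_insert (by decide), Finset.sum_insert (by decide), Finset.sum_singleton]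

lemma score_bridge (Q : WProfile) (x : Cand) : copelandScore Q x = mScore (ocmp Q) x := by
  unfold copelandScore mScore
  rw [Finset.card_filter, sum_cand]
  have H : ∀ z : Cand, (if z ≠ x ∧ Nw Q z x < Nw Q x z then 1 else 0)
      = (if ocmp Q x z = .gt then 1 else 0) := by
    intro z
    by_cases hz : z = x
    · subst hz
      rw [if_neg (by simp), if_neg (by rw [ocmp_self]; simp)]
    · by_cases h : Nw Q z x < Nw Q x z
      · rw [if_pos ⟨hz, h⟩, if_pos (show ocmp Q x z = Ordering.gt from compare_gt_iff_gt.2 h)]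
      · rw [if_neg (fun hc => h hc.2), if_neg (show ¬ ocmp Q x z = Ordering.gt from fun hc => h (compare_gt_iff_gt.1 hc))]
  rw [H .a, H .b, H .c]

lemma max'_eq (S : Finset Cand) (h : S.Nonempty) (x : Cand) (hx : x ∈ S)
    (hall : ∀ y ∈ S, T.le y x) : @Finset.max' Cand T S h = x := by
  letI := T
  exact le_antisymm (Finset.max'_le S h x hall) (Finset.le_max' S x hx)

lemma arg_bridge (hT : ∀ x : Cand, T.le x Cand.c) (f : Cand → ℕ) :
    argmaxT T f = mArg (decide (T.lt .a .b)) f := by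
  letI := T
  have hba : T.lt .b .a ↔ ¬ T.lt .a .b := by
    constructor
    · exact fun h h' => absurd (lt_trans h' h) (lt_irrefl _)
    · intro h; exact lt_of_le_of_ne (le_of_not_gt h) (by decide)
  unfold argmaxT mArg
  have hmem : ∀ y : Cand, y ∈ (Finset.univ.filter fun e => ∀ z, f z ≤ f e) ↔ ∀ z, f z ≤ f y := by
    intro y; simp
  split_ifs with h1 h2
  · refine max'_eq T _ _ .c (by rw [hmem]; intro z; cases z <;> simp [h1.1, h1.2]) ?_
    intro y _; exact hT y
  · rcases h2 with h2 | h2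
    · have hca : f .c < f .a := by
        rcases Decidable.not_and_iff_or_not.1 h1 with h | h <;> omega
      refine max'_eq T _ _ .a (by rw [hmem]; intro z; cases z <;> omega) ?_
      intro y hy; rw [hmem] at hy
      cases y with
      | a => exact le_refl _
      | b => exact absurd (hy .a) (by omega)
      | c => exact absurd (hy .a) (by omega)
    · obtain ⟨hfab, htab⟩ := h2
      have hnlt : ¬ T.lt .a .b := by simpa using htab
      have hca : f .c < f .a := by
        rcases Decidable.not_and_iff_or_not.1 h1 with h | h <;> omega
      refine max'_eq T _ _ .a (by rw [hmem]; intro z; cases z <;> omega) ?_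
      intro y hy; rw [hmem] at hy
      cases y with
      | a => exact le_refl _
      | b => exact le_of_lt (hba.2 hnlt)
      | c => exact absurd (hy .a) (by omega)
  · have hab : f .a ≤ f .b := by omega
    have hcb : f .c < f .b := by
      rcases Decidable.not_and_iff_or_not.1 h1 with h | h <;> omega
    refine max'_eq T _ _ .b (by rw [hmem]; intro z; cases z <;> omega) ?_
    intro y hy; rw [hmem] at hy
    cases y with
    | a =>
      rcases lt_or_eq_of_le hab with h | h
      · exact absurd (hy .b) (by omega)
      · have : ¬ (f Cand.a = f Cand.b ∧ decide (T.lt .a .b) = false) := fun hc => h2 (Or.inr hc)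
        have htab : decide (T.lt Cand.a Cand.b) = true := by
          rcases Bool.eq_false_or_eq_true (decide (T.lt Cand.a Cand.b)) with hb | hb
          · exact hb
          · exact absurd ⟨h, hb⟩ this
        exact le_of_lt (of_decide_eq_true htab)
    | b => exact le_refl _
    | c => exact absurd (hy .b) (by omega)

lemma runoff_eq (X Y : WProfile → Cand) (Q : WProfile) :
    runoffWinner T X Y Q = if X Q = Y Q then X Q else pairWin T Q (X Q) (Y Q) := rfl

lemma mWin_eq (oab oac obc : Ordering) (tab : Bool) (p q : Cand) :
    mWin oab oac obc tab p q =
      if mArg tab (mScore (oOf oab oac obc))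
          = mPair (oOf oab oac obc) (tOf tab) (mPair (oOf oab oac obc) (tOf tab) p q) (third p q)
      then mArg tab (mScore (oOf oab oac obc))
      else mPair (oOf oab oac obc) (tOf tab) (mArg tab (mScore (oOf oab oac obc)))
        (mPair (oOf oab oac obc) (tOf tab) (mPair (oOf oab oac obc) (tOf tab) p q) (third p q)) :=
  rfl

lemma bridge (hT : ∀ x : Cand, T.le x Cand.c) (p q : Cand) (Q : WProfile) :
    runoffWinner T (copelandWinner T) (cupWinner T p q) Q
      = mWin (ocmp Q .a .b) (ocmp Q .a .c) (ocmp Q .b .c) (decide (T.lt .a .b)) p q := by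
  obtain ⟨oab, h1⟩ : ∃ o, ocmp Q .a .b = o := ⟨_, rfl⟩
  obtain ⟨oac, h2⟩ : ∃ o, ocmp Q .a .c = o := ⟨_, rfl⟩
  obtain ⟨obc, h3⟩ : ∃ o, ocmp Q .b .c = o := ⟨_, rfl⟩
  rw [h1, h2, h3]
  have ho : ocmp Q = oOf oab oac obc := ocmp_eq_oOf Q h1 h2 h3
  have hcop : copelandWinner T Q = mArg (decide (T.lt .a .b)) (mScore (oOf oab oac obc)) := by
    unfold copelandWinner
    rw [arg_bridge T hT]
    congr 1
    funext x
    rw [score_bridge, ho]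
  have hcup : cupWinner T p q Q
      = mPair (oOf oab oac obc) (tOf (decide (T.lt .a .b)))
          (mPair (oOf oab oac obc) (tOf (decide (T.lt .a .b))) p q) (third p q) := by
    unfold cupWinner
    rw [pair_bridge T hT, pair_bridge T hT, ho]
  rw [runoff_eq, hcop, hcup, mWin_eq]
  by_cases hxy : mArg (decide (T.lt .a .b)) (mScore (oOf oab oac obc))
      = mPair (oOf oab oac obc) (tOf (decide (T.lt .a .b)))
          (mPair (oOf oab oac obc) (tOf (decide (T.lt .a .b))) p q) (third p q)
  · rw [if_pos hxy, if_pos hxy]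
  · rw [if_neg hxy, if_neg hxy, pair_bridge T hT, ho]

def sLe : Ordering → Ordering → Bool
  | .lt, _ => true
  | _, .gt => true
  | .eq, .eq => true
  | _, _ => false

instance : Fintype Ordering := ⟨{.lt,.eq,.gt}, by intro x; cases x <;> decide⟩

set_option maxRecDepth 100000 in
set_option maxHeartbeats 4000000 in
theorem key : ∀ (vab vac vbc uab1 uab2 uac ubc : Ordering) (tab : Bool) (p q : Cand),
    p ≠ q → sLe uac vac = true → sLe ubc vbc = true →
    sLe uab1 vab = true → sLe vab uab2 = true →
    (uab1 = .eq → uab2 = .gt) → (uab2 = .eq → uab1 = .lt) →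
    mWin vab vac vbc tab p q = .c →
    mWin uab1 uac ubc tab p q = .c ∨ mWin uab2 uac ubc tab p q = .c := by decide


lemma Nw_append (P L : WProfile) (x y : Cand) :
    Nw (P ++ L) x y = Nw P x y + Nw L x y := by
  simp [Nw, List.filter_append]

lemma totalW_ofFn {k : ℕ} (f : Fin k → List Cand × ℕ) :
    totalW (List.ofFn f) = ∑ i, (f i).2 := by
  simp [totalW, List.map_ofFn, List.sum_ofFn]

lemma Nw_ofFn_const {k : ℕ} (v : List Cand) (w : Fin k → ℕ) (x y : Cand) :
    Nw (List.ofFn fun i => (v, w i)) x y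
      = if v.idxOf x < v.idxOf y then ∑ i, w i else 0 := by
  unfold Nw
  by_cases h : v.idxOf x < v.idxOf y
  · rw [if_pos h, List.filter_eq_self.2, List.map_ofFn, List.sum_ofFn]
    · rfl
    · intro e he
      rw [List.mem_ofFn] at he
      obtain ⟨i, hi⟩ := he
      rw [← hi]
      simpa using h
  · rw [if_neg h, List.filter_eq_nil_iff.2]
    · rfl
    · intro e he
      rw [List.mem_ofFn] at he
      obtain ⟨i, hi⟩ := he
      rw [← hi]
      simpa using h

lemma Nw_total (L : WProfile) (hL : ValidWProfile L) (x y : Cand) (hxy : x ≠ y) :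
    Nw L x y + Nw L y x = totalW L := by
  induction L with
  | nil => rfl
  | cons e L ih =>
    have he := hL e (List.mem_cons_self)
    have hx : x ∈ e.1 := by
      rw [← List.mem_toFinset, he.1.2]; exact Finset.mem_univ _
    have hy : y ∈ e.1 := by
      rw [← List.mem_toFinset, he.1.2]; exact Finset.mem_univ _
    have hne : e.1.idxOf x ≠ e.1.idxOf y := fun h => hxy ((List.idxOf_inj hx).1 h)
    have ih' := ih (fun p hp => hL p (List.mem_cons_of_mem e hp))
    unfold Nw totalW at *
    rw [List.filter_cons, List.filter_cons]
    by_cases h : e.1.idxOf x < e.1.idxOf y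
    · rw [if_pos (by simpa using h), if_neg (by simp; omega)]
      simp only [List.map_cons, List.sum_cons]
      omega
    · rw [if_neg (by simpa using h), if_pos (by simp; omega)]
      simp only [List.map_cons, List.sum_cons]
      omega

lemma sLe_compare {x y x' y' : ℕ} (h : x + y' ≤ x' + y) :
    sLe (compare x y) (compare x' y') = true := by
  rcases lt_trichotomy x y with h1 | h1 | h1 <;> rcases lt_trichotomy x' y' with h2 | h2 | h2
  · rw [compare_lt_iff_lt.2 h1, compare_lt_iff_lt.2 h2]; rfl
  · rw [compare_lt_iff_lt.2 h1, compare_eq_iff_eq.2 h2]; rfl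
  · rw [compare_lt_iff_lt.2 h1, compare_gt_iff_gt.2 h2]; rfl
  · omega
  · rw [compare_eq_iff_eq.2 h1, compare_eq_iff_eq.2 h2]; rfl
  · rw [compare_eq_iff_eq.2 h1, compare_gt_iff_gt.2 h2]; rfl
  · omega
  · omega
  · rw [compare_gt_iff_gt.2 h1, compare_gt_iff_gt.2 h2]; rfl

end CCM

open CCM

/-- Manipulation of `Copeland + cup` on 3 candidates with weighted votes,
tie-breaking order `T` with `T`-greatest element `c`, and an arbitrary cup
agenda (`p` meets `q` first): some choice of manipulator votes of positive
weights `w₁, …, w_k` makes `c` the `Copeland + cup` winner iff the uniform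
vote `c ≻ b ≻ a` makes `c` the winner or the uniform vote `c ≻ a ≻ b` does. -/
theorem copeland_cup_manipulation
    (T : LinearOrder Cand) (hT : ∀ x : Cand, T.le x Cand.c)
    (p q : Cand) (hpq : p ≠ q)
    (P : WProfile) (hP : ValidWProfile P)
    (k : ℕ) (w : Fin k → ℕ) (hw : ∀ i, 0 < w i) :
    (∃ v : Fin k → List Cand, (∀ i, ValidVote (v i)) ∧
        runoffWinner T (copelandWinner T) (cupWinner T p q)
          (P ++ List.ofFn fun i => (v i, w i)) = Cand.c) ↔
    (runoffWinner T (copelandWinner T) (cupWinner T p q)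
        (P ++ List.ofFn fun i => ([Cand.c, Cand.b, Cand.a], w i)) = Cand.c ∨
      runoffWinner T (copelandWinner T) (cupWinner T p q)
        (P ++ List.ofFn fun i => ([Cand.c, Cand.a, Cand.b], w i)) = Cand.c) := by
  constructor
  · rintro ⟨v, hv, hwin⟩
    rcases Nat.eq_zero_or_pos k with hk | hk
    · subst hk
      left
      simpa [List.ofFn_zero] using hwin
    · set L : WProfile := List.ofFn fun i => (v i, w i) with hLdef
      have hWpos : 0 < ∑ i, w i := Finset.sum_pos (fun i _ => hw i) ⟨⟨0, hk⟩, Finset.mem_univ _⟩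
      have hLval : ValidWProfile L := by
        intro e he
        rw [hLdef, List.mem_ofFn] at he
        obtain ⟨i, hi⟩ := he
        rw [← hi]
        exact ⟨hv i, hw i⟩
      have hLtot : totalW L = ∑ i, w i := by
        rw [hLdef]; exact totalW_ofFn _
      have hab := Nw_total L hLval .a .b (by decide)
      have hac := Nw_total L hLval .a .c (by decide)
      have hbc := Nw_total L hLval .b .c (by decide)
      rw [hLtot] at hab hac hbc
      set Q : WProfile := P ++ L with hQdef
      set Q1 : WProfile := P ++ List.ofFn (fun i => ([Cand.c, Cand.b, Cand.a], w i)) with hQ1def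
      set Q2 : WProfile := P ++ List.ofFn (fun i => ([Cand.c, Cand.a, Cand.b], w i)) with hQ2def
      have N1ab : Nw Q1 .a .b = Nw P .a .b + (0) := by
        rw [hQ1def, Nw_append, Nw_ofFn_const]
        norm_num [show List.idxOf Cand.a [Cand.c, Cand.b, Cand.a] = 2 from rfl,
          show List.idxOf Cand.b [Cand.c, Cand.b, Cand.a] = 1 from rfl]
      have N1ac : Nw Q1 .a .c = Nw P .a .c + (0) := by
        rw [hQ1def, Nw_append, Nw_ofFn_const]
        norm_num [show List.idxOf Cand.a [Cand.c, Cand.b, Cand.a] = 2 from rfl,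
          show List.idxOf Cand.c [Cand.c, Cand.b, Cand.a] = 0 from rfl]
      have N1ba : Nw Q1 .b .a = Nw P .b .a + (∑ i, w i) := by
        rw [hQ1def, Nw_append, Nw_ofFn_const]
        norm_num [show List.idxOf Cand.b [Cand.c, Cand.b, Cand.a] = 1 from rfl,
          show List.idxOf Cand.a [Cand.c, Cand.b, Cand.a] = 2 from rfl]
      have N1bc : Nw Q1 .b .c = Nw P .b .c + (0) := by
        rw [hQ1def, Nw_append, Nw_ofFn_const]
        norm_num [show List.idxOf Cand.b [Cand.c, Cand.b, Cand.a] = 1 from rfl,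
          show List.idxOf Cand.c [Cand.c, Cand.b, Cand.a] = 0 from rfl]
      have N1ca : Nw Q1 .c .a = Nw P .c .a + (∑ i, w i) := by
        rw [hQ1def, Nw_append, Nw_ofFn_const]
        norm_num [show List.idxOf Cand.c [Cand.c, Cand.b, Cand.a] = 0 from rfl,
          show List.idxOf Cand.a [Cand.c, Cand.b, Cand.a] = 2 from rfl]
      have N1cb : Nw Q1 .c .b = Nw P .c .b + (∑ i, w i) := by
        rw [hQ1def, Nw_append, Nw_ofFn_const]
        norm_num [show List.idxOf Cand.c [Cand.c, Cand.b, Cand.a] = 0 from rfl,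
          show List.idxOf Cand.b [Cand.c, Cand.b, Cand.a] = 1 from rfl]
      have N2ab : Nw Q2 .a .b = Nw P .a .b + (∑ i, w i) := by
        rw [hQ2def, Nw_append, Nw_ofFn_const]
        norm_num [show List.idxOf Cand.a [Cand.c, Cand.a, Cand.b] = 1 from rfl,
          show List.idxOf Cand.b [Cand.c, Cand.a, Cand.b] = 2 from rfl]
      have N2ac : Nw Q2 .a .c = Nw P .a .c + (0) := by
        rw [hQ2def, Nw_append, Nw_ofFn_const]
        norm_num [show List.idxOf Cand.a [Cand.c, Cand.a, Cand.b] = 1 from rfl,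
          show List.idxOf Cand.c [Cand.c, Cand.a, Cand.b] = 0 from rfl]
      have N2ba : Nw Q2 .b .a = Nw P .b .a + (0) := by
        rw [hQ2def, Nw_append, Nw_ofFn_const]
        norm_num [show List.idxOf Cand.b [Cand.c, Cand.a, Cand.b] = 2 from rfl,
          show List.idxOf Cand.a [Cand.c, Cand.a, Cand.b] = 1 from rfl]
      have N2bc : Nw Q2 .b .c = Nw P .b .c + (0) := by
        rw [hQ2def, Nw_append, Nw_ofFn_const]
        norm_num [show List.idxOf Cand.b [Cand.c, Cand.a, Cand.b] = 2 from rfl,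
          show List.idxOf Cand.c [Cand.c, Cand.a, Cand.b] = 0 from rfl]
      have N2ca : Nw Q2 .c .a = Nw P .c .a + (∑ i, w i) := by
        rw [hQ2def, Nw_append, Nw_ofFn_const]
        norm_num [show List.idxOf Cand.c [Cand.c, Cand.a, Cand.b] = 0 from rfl,
          show List.idxOf Cand.a [Cand.c, Cand.a, Cand.b] = 1 from rfl]
      have N2cb : Nw Q2 .c .b = Nw P .c .b + (∑ i, w i) := by
        rw [hQ2def, Nw_append, Nw_ofFn_const]
        norm_num [show List.idxOf Cand.c [Cand.c, Cand.a, Cand.b] = 0 from rfl,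
          show List.idxOf Cand.b [Cand.c, Cand.a, Cand.b] = 2 from rfl]
      have NQ : ∀ x y : Cand, Nw Q x y = Nw P x y + Nw L x y := by
        intro x y
        rw [hQdef, Nw_append]
      rw [bridge T hT p q Q] at hwin
      have hkey := key (ocmp Q .a .b) (ocmp Q .a .c) (ocmp Q .b .c)
        (ocmp Q1 .a .b) (ocmp Q2 .a .b) (ocmp Q1 .a .c) (ocmp Q1 .b .c)
        (decide (T.lt .a .b)) p q hpq
        (by unfold ocmp
            rw [N1ac, N1ca, NQ .a .c, NQ .c .a]
            exact sLe_compare (by omega))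
        (by unfold ocmp
            rw [N1bc, N1cb, NQ .b .c, NQ .c .b]
            exact sLe_compare (by omega))
        (by unfold ocmp
            rw [N1ab, N1ba, NQ .a .b, NQ .b .a]
            exact sLe_compare (by omega))
        (by unfold ocmp
            rw [N2ab, N2ba, NQ .a .b, NQ .b .a]
            exact sLe_compare (by omega))
        (by unfold ocmp
            rw [N1ab, N1ba, N2ab, N2ba]
            intro h
            have := compare_eq_iff_eq.1 h
            exact compare_gt_iff_gt.2 (by omega))
        (by unfold ocmp
            rw [N1ab, N1ba, N2ab, N2ba]
            intro h
            have := compare_eq_iff_eq.1 h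
            exact compare_lt_iff_lt.2 (by omega))
        hwin
      have hac12 : ocmp Q2 .a .c = ocmp Q1 .a .c := by
        unfold ocmp
        rw [N1ac, N1ca, N2ac, N2ca]
      have hbc12 : ocmp Q2 .b .c = ocmp Q1 .b .c := by
        unfold ocmp
        rw [N1bc, N1cb, N2bc, N2cb]
      rcases hkey with h | h
      · left
        rw [bridge T hT p q Q1]
        exact h
      · right
        rw [bridge T hT p q Q2, hac12, hbc12]
        exact h
  · rintro (h | h)
    · exact ⟨fun _ => [Cand.c, Cand.b, Cand.a], fun i => show ValidVote [Cand.c, Cand.b, Cand.a] from ⟨by decide, by decide⟩, h⟩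
    · exact ⟨fun _ => [Cand.c, Cand.a, Cand.b], fun i => show ValidVote [Cand.c, Cand.a, Cand.b] from ⟨by decide, by decide⟩, h⟩
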